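/- If α ∈ Δ+_r ∪ {β_r} and γ ∈ Δ+_s ∪ {β_s} with t = min(r,s), and α + γ is a root, then α + γ ∈ Δ+_t ∪ {β_t}. Hence the subspaces m_r = g_{β_r} + Σ_{α ∈ Δ+_r} g_α satisfy [m_r, m_s] ⊆ m_{min(r,s)} and each n_r = m_1 + ... + m_r is an ideal in the nilpotent algebra n = Σ_{α ∈ Δ+} g_α. -/

import Mathlib

open scoped RealInnerProductSpace

private lemma aux_bracket {L : Type*} [LieRing L] [LieAlgebra ℝ L] {ι κ : Sort*}
    (p : ι → Submodule ℝ L) (q : κ → Submodule ℝ L) (N : Submodule ℝ L)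
    (h : ∀ i j, ∀ x ∈ p i, ∀ y ∈ q j, ⁅x, y⁆ ∈ N) :
    ∀ x ∈ iSup p, ∀ y ∈ iSup q, ⁅x, y⁆ ∈ N := by
  intro x hx
  refine Submodule.iSup_induction p (motive := fun x => ∀ y ∈ iSup q, ⁅x, y⁆ ∈ N) hx ?_ ?_ ?_
  · intro i xi hxi y hy
    refine Submodule.iSup_induction q (motive := fun y => ⁅xi, y⁆ ∈ N) hy ?_ ?_ ?_
    · exact fun j z hz => h i j xi hxi z hz
    · simp
    · intro a b ha hb; rw [lie_add]; exact N.add_mem ha hb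
  · intro y hy; simp
  · intro a b ha hb y hy; rw [add_lie]; exact N.add_mem (ha y hy) (hb y hy)

/-- If `α ∈ Δ⁺_r ∪ {β_r}` and `γ ∈ Δ⁺_s ∪ {β_s}` with `t = min(r,s)` and `α + γ` is a
root, then `α + γ ∈ Δ⁺_t ∪ {β_t}`.  Hence the subspaces
`m_r = g_{β_r} + Σ_{α ∈ Δ⁺_r} g_α` satisfy `[m_r, m_s] ⊆ m_{min(r,s)}` and each
`n_r = m_1 + ⋯ + m_r` is an ideal in the nilpotent algebra `n = Σ_{α ∈ Δ⁺} g_α`. -/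
theorem stmt10 {V L : Type*} [NormedAddCommGroup V] [InnerProductSpace ℝ V]
    [LieRing L] [LieAlgebra ℝ L]
    (Δ pos : Set V) (m : ℕ) (β : ℕ → V) (Layer : ℕ → Set V)
    (g : V → Submodule ℝ L)
    (hfin : Δ.Finite) (h0 : (0 : V) ∉ Δ) (hposΔ : pos ⊆ Δ)
    (hnn : ∀ α ∈ pos, -α ∉ pos)
    -- sum of two positive roots, when a root, is positive
    (hsum : ∀ α ∈ pos, ∀ γ ∈ pos, α + γ ∈ Δ → α + γ ∈ pos)
    -- layer characterization: α ∈ Δ⁺_r ∪ {β_r} iff α ⊥ β_i (i<r) and ⟨α, β_r⟩ > 0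
    (hchar : ∀ r < m, Layer r ∪ {β r} =
      {α ∈ pos | (∀ i < r, ⟪α, β i⟫ = 0) ∧ 0 < ⟪α, β r⟫})
    -- the layers together with the cascade roots exhaust Δ⁺
    (hcover : pos = ⋃ r ∈ Set.Iio m, (Layer r ∪ {β r}))
    -- root space bracket rule and vanishing of non-root spaces
    (hbr : ∀ α γ : V, ∀ x ∈ g α, ∀ y ∈ g γ, ⁅x, y⁆ ∈ g (α + γ))
    (hzero : ∀ μ : V, μ ∉ Δ → g μ = ⊥) :
    -- the root-theoretic statement
    (∀ r < m, ∀ s < m, ∀ α ∈ Layer r ∪ {β r}, ∀ γ ∈ Layer s ∪ {β s},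
      α + γ ∈ Δ → α + γ ∈ Layer (min r s) ∪ {β (min r s)}) ∧
    -- [m_r, m_s] ⊆ m_{min(r,s)}
    (∀ r < m, ∀ s < m,
      ∀ x ∈ (⨆ α ∈ Layer r ∪ {β r}, g α),
      ∀ y ∈ (⨆ α ∈ Layer s ∪ {β s}, g α),
        ⁅x, y⁆ ∈ (⨆ α ∈ Layer (min r s) ∪ {β (min r s)}, g α)) ∧
    -- each n_r is an ideal in n
    (∀ r < m,
      ∀ x ∈ (⨆ α ∈ pos, g α),
      ∀ y ∈ (⨆ i ∈ Set.Iic r, ⨆ α ∈ Layer i ∪ {β i}, g α),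
        ⁅x, y⁆ ∈ (⨆ i ∈ Set.Iic r, ⨆ α ∈ Layer i ∪ {β i}, g α)) := by
  have part1 : ∀ r < m, ∀ s < m, ∀ α ∈ Layer r ∪ {β r}, ∀ γ ∈ Layer s ∪ {β s},
      α + γ ∈ Δ → α + γ ∈ Layer (min r s) ∪ {β (min r s)} := by
    intro r hr s hs α hα γ hγ hroot
    rw [hchar r hr] at hα
    rw [hchar s hs] at hγ
    obtain ⟨hαpos, hαperp, hαr⟩ := hα
    obtain ⟨hγpos, hγperp, hγs⟩ := hγ
    have htm : min r s < m := lt_of_le_of_lt (min_le_left r s) hr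
    rw [hchar _ htm]
    refine ⟨hsum α hαpos γ hγpos hroot, ?_, ?_⟩
    · intro i hi
      rw [inner_add_left, hαperp i (lt_of_lt_of_le hi (min_le_left r s)),
        hγperp i (lt_of_lt_of_le hi (min_le_right r s)), add_zero]
    · rw [inner_add_left]
      rcases le_total r s with h | h
      · rw [min_eq_left h]
        rcases eq_or_lt_of_le h with rfl | hlt
        · exact add_pos hαr hγs
        · rw [hγperp r hlt, add_zero]; exact hαr
      · rw [min_eq_right h]
        rcases eq_or_lt_of_le h with h' | hlt
        · subst h'; exact add_pos hαr hγs
        · rw [hαperp s hlt, zero_add]; exact hγs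
  refine ⟨part1, ?_, ?_⟩
  · -- part 2
    intro r hr s hs x hx y hy
    rw [iSup_subtype'] at hx hy
    refine aux_bracket (fun α : ↥(Layer r ∪ {β r}) => g (α : V))
      (fun γ : ↥(Layer s ∪ {β s}) => g (γ : V)) _ ?_ x hx y hy
    rintro ⟨α, hα⟩ ⟨γ, hγ⟩ a ha b hb
    have hbr' := hbr α γ a ha b hb
    by_cases hroot : α + γ ∈ Δ
    · have := part1 r hr s hs α hα γ hγ hroot
      exact (le_iSup₂ (f := fun μ (_ : μ ∈ Layer (min r s) ∪ {β (min r s)}) => g μ)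
        (α + γ) this) hbr'
    · rw [hzero _ hroot] at hbr'
      rw [Submodule.mem_bot] at hbr'
      rw [hbr']; exact Submodule.zero_mem _
  · -- part 3
    intro r hr x hx y hy
    rw [iSup_subtype'] at hx hy
    refine aux_bracket (fun α : pos => g (α : V))
      (fun i : Set.Iic r => ⨆ α ∈ Layer (i : ℕ) ∪ {β (i : ℕ)}, g α) _ ?_ x hx y hy
    rintro ⟨α, hα⟩ ⟨i, hi⟩ a ha b hb
    simp only [iSup_subtype'] at hb
    refine aux_bracket (fun _ : Unit => g α)
      (fun γ : ↥(Layer i ∪ {β i}) => g (γ : V)) _ ?_ a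
      (by rw [iSup_const]; exact ha) b hb
    rintro _ ⟨γ, hγ⟩ a' ha' b' hb'
    -- find the layer of α
    have hα' := hα
    rw [hcover] at hα'
    simp only [Set.mem_iUnion, Set.mem_Iio] at hα'
    obtain ⟨s, hs, hαs⟩ := hα'
    have him : (i : ℕ) < m := lt_of_le_of_lt hi hr
    have hbr' := hbr α γ a' ha' b' hb'
    by_cases hroot : α + γ ∈ Δ
    · have hmem := part1 s hs i him α hαs γ hγ hroot
      have hle : g (α + γ) ≤ ⨆ j ∈ Set.Iic r, ⨆ μ ∈ Layer j ∪ {β j}, g μ := by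
        refine le_trans ?_ (le_iSup₂ (f := fun j (_ : j ∈ Set.Iic r) =>
          ⨆ μ ∈ Layer j ∪ {β j}, g μ) (min s i) (le_trans (min_le_right s i) hi))
        exact le_iSup₂ (f := fun μ (_ : μ ∈ Layer (min s i) ∪ {β (min s i)}) => g μ)
          (α + γ) hmem
      exact hle hbr'
    · rw [hzero _ hroot] at hbr'
      rw [Submodule.mem_bot] at hbr'
      rw [hbr']; exact Submodule.zero_mem _
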